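/- Thomson's principle: for a finite electrical network (𝒳,c) and disjoint nonempty subsets A, B of 𝒳, the effective resistance satisfies R(A,B) = min{𝒟(φ) : φ a unitary flow from A to B}, and the minimum is attained at the unit current flow i_{A,B} = −c∇V_{A,B}/C(A,B) and at no other unitary flow. -/

import Mathlib

/-- `HitPath A B t` : the finite trajectory `t` ends in `A` and all its earlier
states avoid `A ∪ B`; it realizes the event "the walk hits `A` (strictly) before `B`". -/
def HitPath {X : Type*} (A B : Set X) (t : List X) : Prop :=
  ∃ t' z, t = t' ++ [z] ∧ z ∈ A ∧ ∀ w ∈ t', w ∉ A ∪ B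

/-- Probability weight of the finite trajectory `x :: l` for the chain with
transition probabilities `p`. -/
noncomputable def pathWtR {X : Type*} (p : X → X → ℝ) : X → List X → ℝ
  | _, [] => 1
  | x, y :: l => p x y * pathWtR p y l

open Classical in
/-- `P_x(τ_A < τ_B)`. -/
noncomputable def hitProbR {X : Type*} (p : X → X → ℝ) (A B : Set X) (x : X) : ℝ :=
  ∑' l : List X, if HitPath A B (x :: l) then pathWtR p x l else 0

open Classical in
/-- `P_a(τ_A⁺ > τ_B⁺)`: at positive times the walk hits `B` strictly before `A`. -/
noncomputable def escProbR {X : Type*} (p : X → X → ℝ) (A B : Set X) (a : X) : ℝ :=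
  ∑' l : List X, if HitPath B A l then pathWtR p a l else 0

/-- total conductance (weight) at `x`. -/
noncomputable def degR {X : Type*} [Fintype X] (c : X → X → ℝ) (x : X) : ℝ := ∑ y, c x y

/-- transition probabilities of the random walk associated with the network. -/
noncomputable def transPR {X : Type*} [Fintype X] (c : X → X → ℝ) (x y : X) : ℝ :=
  c x y / degR c x

/-- The positive-conductance graph of the network is connected. -/
def NetConnectedR {X : Type*} (c : X → X → ℝ) : Prop :=
  ∀ x y : X, Relation.ReflTransGen (fun u v => 0 < c u v) x y

/-- Dirichlet form `𝒟(f) = ½ Σ_{x,y} c(x,y)(f(x)−f(y))²`. -/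
noncomputable def dirichletR {X : Type*} [Fintype X] (c : X → X → ℝ) (f : X → ℝ) : ℝ :=
  (1 / 2) * ∑ x, ∑ y, c x y * (f x - f y) ^ 2

/-- `φ` is a unitary flow from `A` to `B`: an antisymmetric function supported on the
edges, with nonnegative divergence on `A`, nonpositive divergence on `B`, zero
divergence off `A ∪ B`, and total strength `Σ_{a∈A} div_a φ = 1`. -/
def IsUnitFlowR {X : Type*} [Fintype X] (c : X → X → ℝ) (A B : Finset X)
    (φ : X → X → ℝ) : Prop :=
  (∀ u v, φ v u = -φ u v) ∧ (∀ u v, c u v = 0 → φ u v = 0) ∧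
    (∀ a ∈ A, 0 ≤ ∑ v, φ a v) ∧ (∀ b ∈ B, (∑ v, φ b v) ≤ 0) ∧
    (∀ z, z ∉ A → z ∉ B → (∑ v, φ z v) = 0) ∧ (∑ a ∈ A, ∑ v, φ a v) = 1

/-- Energy dissipated by a flow: `𝒟(φ) = ½ Σ_{e∈ℰ} r(e) φ(e)²` with `r(e) = 1/c(e)`. -/
noncomputable def flowEnergyR {X : Type*} [Fintype X] (c : X → X → ℝ) (φ : X → X → ℝ) : ℝ :=
  (1 / 2) * ∑ u, ∑ v, if 0 < c u v then φ u v ^ 2 / c u v else 0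

set_option linter.unusedSectionVars false

section Aux
variable {X : Type*}

lemma pathWtR_nonneg {p : X → X → ℝ} (hp : ∀ a b, 0 ≤ p a b) :
    ∀ (x : X) (l : List X), 0 ≤ pathWtR p x l
  | _, [] => by simp [pathWtR]
  | x, y :: l => by
      rw [pathWtR]; exact mul_nonneg (hp x y) (pathWtR_nonneg hp y l)

lemma hitPath_antichain {A B : Set X} {t₁ t₂ : List X}
    (h₁ : HitPath A B t₁) (h₂ : HitPath A B t₂) (hpre : t₁ <+: t₂) : t₁ = t₂ := by
  obtain ⟨u₁, z₁, rfl, hz₁, _⟩ := h₁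
  obtain ⟨u₂, z₂, rfl, _, hav₂⟩ := h₂
  rcases eq_or_lt_of_le hpre.length_le with heq | hlt
  · exact hpre.eq_of_length heq
  · exfalso
    have hle : (u₁ ++ [z₁]).length ≤ u₂.length := by
      simp only [List.length_append, List.length_singleton] at hlt ⊢; omega
    have hpre2 : (u₁ ++ [z₁]) <+: u₂ := by
      have h1 := List.prefix_iff_eq_take.mp hpre
      rw [List.take_append_of_le_length hle] at h1
      rw [h1]; exact List.take_prefix _ _
    exact hav₂ z₁ (hpre2.subset (by simp)) (Set.mem_union_left _ hz₁)

end Aux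

open Finset in
lemma antichain_wt_sum_le [Fintype X] (p : X → X → ℝ)
    (hp : ∀ a b, 0 ≤ p a b) (hrow : ∀ a, ∑ b, p a b = 1) :
    ∀ (n : ℕ) (S : Finset (List X)) (x : X), (∀ l ∈ S, l.length ≤ n) →
      (∀ l₁ ∈ S, ∀ l₂ ∈ S, l₁ <+: l₂ → l₁ = l₂) →
      ∑ l ∈ S, pathWtR p x l ≤ 1 := by
  classical
  intro n
  induction n with
  | zero =>
    intro S x hlen _
    have hsub : S ⊆ {([] : List X)} := fun l hl => by
      simp [List.length_eq_zero_iff.mp (Nat.le_zero.mp (hlen l hl))]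
    calc ∑ l ∈ S, pathWtR p x l ≤ ∑ l ∈ {([] : List X)}, pathWtR p x l :=
        Finset.sum_le_sum_of_subset_of_nonneg hsub (fun l _ _ => pathWtR_nonneg hp x l)
      _ = 1 := by simp [pathWtR]
  | succ n ih =>
    intro S x hlen hanti
    by_cases hnil : ([] : List X) ∈ S
    · have hsub : S ⊆ {([] : List X)} := fun l hl => by
        simp only [Finset.mem_singleton]
        exact (hanti [] hnil l hl List.nil_prefix).symm
      calc ∑ l ∈ S, pathWtR p x l ≤ ∑ l ∈ {([] : List X)}, pathWtR p x l :=
          Finset.sum_le_sum_of_subset_of_nonneg hsub (fun l _ _ => pathWtR_nonneg hp x l)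
        _ = 1 := by simp [pathWtR]
    · -- decompose by head
      have hfib : ∑ o : Option X, ∑ l ∈ S.filter (fun l => l.head? = o), pathWtR p x l
          = ∑ l ∈ S, pathWtR p x l :=
        Finset.sum_fiberwise_of_maps_to (fun l _ => Finset.mem_univ _) _
      have hnone : S.filter (fun l => l.head? = (none : Option X)) = ∅ := by
        apply Finset.filter_eq_empty_iff.mpr
        intro l hl h
        exact hnil (by rwa [List.head?_eq_none_iff.mp h] at hl)
      -- per head y
      have hmem : ∀ (y : X) l', l' ∈ (S.filter (fun l => l.head? = some y)).image List.tail
          → y :: l' ∈ S := by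
        intro y l' h
        obtain ⟨l, hl, rfl⟩ := Finset.mem_image.mp h
        obtain ⟨hlS, hhead⟩ := Finset.mem_filter.mp hl
        cases l with
        | nil => simp at hhead
        | cons a t => obtain rfl : a = y := by simpa using hhead
                      simpa using hlS
      have hysum : ∀ y : X, ∑ l ∈ S.filter (fun l => l.head? = some y), pathWtR p x l
          = p x y * ∑ l' ∈ (S.filter (fun l => l.head? = some y)).image List.tail,
              pathWtR p y l' := by
        intro y
        rw [Finset.mul_sum, Finset.sum_image]
        · apply Finset.sum_congr rfl
          intro l hl
          obtain ⟨_, hhead⟩ := Finset.mem_filter.mp hl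
          cases l with
          | nil => simp at hhead
          | cons a t => obtain rfl : a = y := by simpa using hhead
                        rw [pathWtR]; rfl
        · intro l₁ h₁ l₂ h₂ htl
          obtain ⟨_, hh₁⟩ := Finset.mem_filter.mp h₁
          obtain ⟨_, hh₂⟩ := Finset.mem_filter.mp h₂
          cases l₁ with
          | nil => simp at hh₁
          | cons a t => cases l₂ with
            | nil => simp at hh₂
            | cons b s =>
              have ha : a = y := by simpa using hh₁
              have hb : b = y := by simpa using hh₂
              have hts : t = s := by simpa using htl
              rw [ha, hb, hts]
      have hbound : ∀ y : X, ∑ l' ∈ (S.filter (fun l => l.head? = some y)).image List.tail,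
          pathWtR p y l' ≤ 1 := by
        intro y
        apply ih _ y
        · intro l' hl'
          have h := hlen _ (hmem y l' hl')
          simp only [List.length_cons] at h
          omega
        · intro l₁ h₁ l₂ h₂ hpre
          have := hanti _ (hmem y l₁ h₁) _ (hmem y l₂ h₂) (List.cons_prefix_cons.mpr ⟨rfl, hpre⟩)
          simpa using this
      calc ∑ l ∈ S, pathWtR p x l
          = ∑ o : Option X, ∑ l ∈ S.filter (fun l => l.head? = o), pathWtR p x l := hfib.symm
        _ = ∑ y : X, ∑ l ∈ S.filter (fun l => l.head? = some y), pathWtR p x l := by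
            rw [Fintype.sum_option, hnone]; simp
        _ ≤ ∑ y : X, p x y := Finset.sum_le_sum fun y _ => by
            rw [hysum y]
            have := mul_le_mul_of_nonneg_left (hbound y) (hp x y)
            simpa using this
        _ = 1 := hrow x


section Hit
variable [Fintype X] {p : X → X → ℝ} {A B : Set X}

open Classical in
lemma hit_sum_le (hp : ∀ a b, 0 ≤ p a b) (hrow : ∀ a, ∑ b, p a b = 1) (x : X)
    (T : Finset (List X)) :
    ∑ l ∈ T, (if HitPath A B (x :: l) then pathWtR p x l else 0) ≤ 1 := by
  classical
  rw [← Finset.sum_filter]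
  apply antichain_wt_sum_le p hp hrow ((T.filter (fun l => HitPath A B (x :: l))).sup List.length)
  · intro l hl; exact Finset.le_sup hl
  · intro l₁ h₁ l₂ h₂ hpre
    have hh₁ := (Finset.mem_filter.mp h₁).2
    have hh₂ := (Finset.mem_filter.mp h₂).2
    have := hitPath_antichain hh₁ hh₂ (List.cons_prefix_cons.mpr ⟨rfl, hpre⟩)
    simpa using this

open Classical in
lemma hit_summable (hp : ∀ a b, 0 ≤ p a b) (hrow : ∀ a, ∑ b, p a b = 1) (x : X) :
    Summable (fun l => if HitPath A B (x :: l) then pathWtR p x l else 0) :=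
  summable_of_sum_le
    (fun l => by dsimp; split
                 exacts [pathWtR_nonneg hp x l, le_rfl])
    (hit_sum_le hp hrow x)

lemma hitProbR_nonneg (hp : ∀ a b, 0 ≤ p a b) (x : X) : 0 ≤ hitProbR p A B x := by
  classical
  apply tsum_nonneg
  intro l; split
  exacts [pathWtR_nonneg hp x l, le_rfl]

lemma hitProbR_le_one (hp : ∀ a b, 0 ≤ p a b) (hrow : ∀ a, ∑ b, p a b = 1) (x : X) :
    hitProbR p A B x ≤ 1 := by
  classical
  exact Summable.tsum_le_of_sum_le (hit_summable hp hrow x) (hit_sum_le hp hrow x)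

lemma hitProbR_of_mem_A {a : X} (ha : a ∈ A) : hitProbR p A B a = 1 := by
  classical
  rw [hitProbR]
  rw [tsum_eq_single ([] : List X)]
  · rw [if_pos ⟨[], a, rfl, ha, by simp⟩]; simp [pathWtR]
  · intro l hl
    rw [if_neg]
    rintro ⟨t', z, ht, hz, hav⟩
    cases t' with
    | nil =>
      simp only [List.nil_append] at ht
      have h2 := congrArg List.length ht
      simp only [List.length_cons, List.length_nil, List.length_singleton] at h2
      exact hl (List.length_eq_zero_iff.mp (by omega))
    | cons w t'' =>
      have hw : w = a := by
        have := congrArg (List.head? ·) ht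
        simpa using this.symm
      exact hav w (by simp) (hw ▸ Set.mem_union_left _ ha)

lemma hitProbR_of_mem_B {b : X} (hb : b ∈ B) (hbA : b ∉ A) : hitProbR p A B b = 0 := by
  classical
  rw [hitProbR]
  have : ∀ l : List X, (if HitPath A B (b :: l) then pathWtR p b l else 0) = 0 := by
    intro l
    rw [if_neg]
    rintro ⟨t', z, ht, hz, hav⟩
    cases t' with
    | nil =>
      have : b = z := by
        have := congrArg (List.head? ·) ht
        simpa using this
      exact hbA (this ▸ hz)
    | cons w t'' =>
      have hw : w = b := by
        have := congrArg (List.head? ·) ht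
        simpa using this.symm
      exact hav w (by simp) (hw ▸ Set.mem_union_right _ hb)
  exact (tsum_congr this).trans tsum_zero

lemma hitPath_cons_iff {x : X} (hx : x ∉ A ∪ B) (y : X) (l : List X) :
    HitPath A B (x :: y :: l) ↔ HitPath A B (y :: l) := by
  constructor
  · rintro ⟨t', z, ht, hz, hav⟩
    cases t' with
    | nil =>
      exfalso
      have := congrArg List.length ht
      simp at this
    | cons w t'' =>
      rw [List.cons_append] at ht
      obtain ⟨rfl, ht2⟩ : w = x ∧ y :: l = t'' ++ [z] := by
        constructor
        · have h := congrArg (List.head? ·) ht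
          simp only [List.head?_cons] at h
          exact (Option.some.injEq .. ▸ h).symm
        · have h := congrArg List.tail ht
          simpa using h
      exact ⟨t'', z, ht2, hz, fun w hw => hav w (by simp [hw])⟩
  · rintro ⟨t', z, ht, hz, hav⟩
    refine ⟨x :: t', z, by rw [List.cons_append, ← ht], hz, ?_⟩
    intro w hw
    rcases List.mem_cons.mp hw with rfl | hw
    · exact hx
    · exact hav w hw

open Classical in
lemma hitProbR_harmonic (hp : ∀ a b, 0 ≤ p a b) (hrow : ∀ a, ∑ b, p a b = 1)
    {x : X} (hx : x ∉ A ∪ B) :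
    hitProbR p A B x = ∑ y, p x y * hitProbR p A B y := by
  classical
  have hxA : x ∉ A := fun h => hx (Set.mem_union_left _ h)
  set f : List X → ℝ := fun l => if HitPath A B (x :: l) then pathWtR p x l else 0 with hf
  have hsumm : Summable f := hit_summable hp hrow x
  have hinj : Function.Injective (fun q : X × List X => q.1 :: q.2) := by
    rintro ⟨a, l⟩ ⟨b, m⟩ h
    simpa [Prod.ext_iff] using h
  have hrange : Function.support f ⊆ Set.range (fun q : X × List X => q.1 :: q.2) := by
    intro l hl
    cases l with
    | nil =>
      exfalso
      apply hl
      rw [hf]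
      dsimp only
      rw [if_neg]
      rintro ⟨t', z, ht, hz, hav⟩
      cases t' with
      | nil =>
        have : x = z := by have := congrArg (List.head? ·) ht; simpa using this
        exact hxA (this ▸ hz)
      | cons w t'' =>
        have := congrArg List.length ht
        simp at this
    | cons y m => exact ⟨(y, m), rfl⟩
  have key : ∑' q : X × List X, f (q.1 :: q.2) = hitProbR p A B x :=
    hinj.tsum_eq hrange
  have hterm : ∀ (y : X) (l : List X),
      f (y :: l) = p x y * (if HitPath A B (y :: l) then pathWtR p y l else 0) := by
    intro y l
    rw [hf]
    dsimp only
    rw [show pathWtR p x (y :: l) = p x y * pathWtR p y l from rfl]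
    by_cases h : HitPath A B (y :: l)
    · rw [if_pos ((hitPath_cons_iff hx y l).mpr h), if_pos h]
    · rw [if_neg (fun hh => h ((hitPath_cons_iff hx y l).mp hh)), if_neg h, mul_zero]
  have hsum2 : Summable (fun q : X × List X => f (q.1 :: q.2)) :=
    hsumm.comp_injective hinj
  calc hitProbR p A B x = ∑' q : X × List X, f (q.1 :: q.2) := key.symm
    _ = ∑' (y : X), ∑' (l : List X), f (y :: l) := Summable.tsum_prod' hsum2 (fun y =>
        (hsum2.comp_injective (i := fun l : List X => ((y, l) : X × List X))
          (fun a b h => by simpa using h)))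
    _ = ∑' (y : X), p x y * hitProbR p A B y := by
        apply tsum_congr
        intro y
        rw [hitProbR]
        rw [← tsum_mul_left]
        exact tsum_congr (hterm y)
    _ = ∑ y, p x y * hitProbR p A B y := tsum_fintype _

end Hit







section Main
variable {X : Type*} [Fintype X]

lemma divKey (ψ : X → X → ℝ) (f : X → ℝ) (hanti : ∀ u v, ψ v u = -ψ u v) :
    (1/2) * ∑ u, ∑ v, ψ u v * (f u - f v) = ∑ u, f u * ∑ v, ψ u v := by
  have hswap : ∑ u, ∑ v, ψ u v * f v = -∑ u, ∑ v, ψ u v * f u := by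
    rw [Finset.sum_comm]
    calc ∑ v, ∑ u, ψ u v * f v = ∑ u, ∑ v, -(ψ u v * f u) := by
          apply Finset.sum_congr rfl; intro u _
          apply Finset.sum_congr rfl; intro v _
          rw [hanti u v]; ring
      _ = -∑ u, ∑ v, ψ u v * f u := by simp
  have hexp : ∑ u, ∑ v, ψ u v * (f u - f v)
      = (∑ u, ∑ v, ψ u v * f u) - ∑ u, ∑ v, ψ u v * f v := by
    simp_rw [mul_sub, Finset.sum_sub_distrib]
  have hmul : ∑ u, f u * ∑ v, ψ u v = ∑ u, ∑ v, ψ u v * f u := by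
    apply Finset.sum_congr rfl; intro u _
    rw [Finset.mul_sum]
    apply Finset.sum_congr rfl; intro v _
    ring
  rw [hexp, hswap, sub_neg_eq_add, hmul]; ring

end Main

section Main2
set_option linter.unusedSectionVars false
set_option maxHeartbeats 1000000
variable {X : Type*} [Fintype X] {c : X → X → ℝ}

lemma exists_edge_ne {f : X → ℝ} {a b : X}
    (h : Relation.ReflTransGen (fun u v => 0 < c u v) a b) (hne : f a ≠ f b) :
    ∃ u v, 0 < c u v ∧ f u ≠ f v := by
  induction h with
  | refl => exact absurd rfl hne
  | @tail m b hm hc ih =>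
    by_cases hfb : f m = f b
    · exact ih (fun h => hne (h.trans hfb))
    · exact ⟨m, b, hc, hfb⟩

theorem thomson_main (c : X → X → ℝ)
    (hnn : ∀ x y, 0 ≤ c x y) (hsymm : ∀ x y, c x y = c y x)
    (hpos : ∀ x, 0 < degR c x) (hconn : NetConnectedR c)
    (A B : Finset X) (hA : A.Nonempty) (hB : B.Nonempty) (hdisj : Disjoint A B)
    (V : X → ℝ) (hVdef : V = fun x => hitProbR (transPR c) (↑A : Set X) (↑B : Set X) x)
    (iAB : X → X → ℝ) (hidef : iAB = fun u v => c u v * (V u - V v) / dirichletR c V) :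
    IsUnitFlowR c A B iAB
    ∧ (∀ φ : X → X → ℝ, IsUnitFlowR c A B φ → (dirichletR c V)⁻¹ ≤ flowEnergyR c φ)
    ∧ flowEnergyR c iAB = (dirichletR c V)⁻¹
    ∧ (∀ φ : X → X → ℝ, IsUnitFlowR c A B φ → flowEnergyR c φ = (dirichletR c V)⁻¹ →
        φ = iAB) := by
  classical
  -- transition matrix facts
  have hp : ∀ a b, 0 ≤ transPR c a b := fun a b => div_nonneg (hnn a b) (hpos a).le
  have hrow : ∀ a, ∑ b, transPR c a b = 1 := by
    intro a
    rw [show (fun b => transPR c a b) = fun b => c a b / degR c a from rfl]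
    rw [← Finset.sum_div]
    exact div_self (hpos a).ne'
  -- V facts
  have hVA : ∀ a ∈ A, V a = 1 := fun a ha => by
    rw [hVdef]; exact hitProbR_of_mem_A (by simpa using ha)
  have hVB : ∀ b ∈ B, V b = 0 := fun b hb => by
    rw [hVdef]
    exact hitProbR_of_mem_B (by simpa using hb)
      (by simpa using fun h => (Finset.disjoint_left.mp hdisj) h hb)
  have hV0 : ∀ x, 0 ≤ V x := fun x => by rw [hVdef]; exact hitProbR_nonneg hp x
  have hV1 : ∀ x, V x ≤ 1 := fun x => by rw [hVdef]; exact hitProbR_le_one hp hrow x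
  -- divergence of the raw current d x = Σ_v c x v (V x - V v)
  set d : X → ℝ := fun x => ∑ v, c x v * (V x - V v) with hd
  have hharm : ∀ x, x ∉ A → x ∉ B → d x = 0 := by
    intro x hxA hxB
    have hx : x ∉ (↑A : Set X) ∪ (↑B : Set X) := by simp [hxA, hxB]
    have h1 : V x = ∑ y, transPR c x y * V y := by
      rw [hVdef]; exact hitProbR_harmonic hp hrow hx
    have h2 : ∑ v, c x v * V v = degR c x * V x := by
      calc ∑ v, c x v * V v = ∑ v, degR c x * (transPR c x v * V v) := by
            apply Finset.sum_congr rfl; intro v _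
            rw [transPR]
            field_simp
            rw [mul_div_assoc, div_self (hpos x).ne', mul_one]
        _ = degR c x * ∑ v, transPR c x v * V v := by rw [Finset.mul_sum]
        _ = degR c x * V x := by rw [← h1]
    rw [hd]
    simp only [mul_sub]
    rw [Finset.sum_sub_distrib, h2, ← Finset.sum_mul, ← degR]
    ring
  have hanti_cgrad : ∀ u v, c v u * (V v - V u) = -(c u v * (V u - V v)) := by
    intro u v; rw [hsymm v u]; ring
  -- dirichlet = Σ_{a∈A} d a
  have hweight : ∀ ψ : X → X → ℝ, (∀ u v, ψ v u = -ψ u v) →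
      (∀ z, z ∉ A → z ∉ B → (∑ v, ψ z v) = 0) →
      (1/2) * ∑ u, ∑ v, ψ u v * (V u - V v) = ∑ a ∈ A, ∑ v, ψ a v := by
    intro ψ hanti hdiv
    rw [divKey ψ V hanti]
    have : ∀ u : X, V u * ∑ v, ψ u v = if u ∈ A then ∑ v, ψ u v else 0 := by
      intro u
      by_cases huA : u ∈ A
      · rw [if_pos huA, hVA u huA, one_mul]
      · rw [if_neg huA]
        by_cases huB : u ∈ B
        · rw [hVB u huB, zero_mul]
        · rw [hdiv u huA huB, mul_zero]
    rw [Finset.sum_congr rfl (fun u _ => this u)]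
    rw [Finset.sum_ite_mem]
    simp
  have hDir : dirichletR c V = ∑ a ∈ A, d a := by
    have h1 : dirichletR c V
        = (1/2) * ∑ u, ∑ v, (c u v * (V u - V v)) * (V u - V v) := by
      rw [dirichletR]
      congr 1
      apply Finset.sum_congr rfl; intro u _
      apply Finset.sum_congr rfl; intro v _
      ring
    rw [h1, hweight (fun u v => c u v * (V u - V v)) hanti_cgrad hharm]
  set C := dirichletR c V with hC
  -- C > 0
  have hCpos : 0 < C := by
    obtain ⟨a, ha⟩ := hA
    obtain ⟨b, hb⟩ := hB
    have hne : V a ≠ V b := by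
      rw [hVA a ha, hVB b hb]; norm_num
    obtain ⟨u₀, v₀, hc₀, hne₀⟩ := exists_edge_ne (hconn a b) hne
    rw [hC, dirichletR]
    apply mul_pos (by norm_num)
    apply Finset.sum_pos'
    · intro u _
      exact Finset.sum_nonneg fun v _ => mul_nonneg (hnn u v) (sq_nonneg _)
    · refine ⟨u₀, Finset.mem_univ _, Finset.sum_pos' (fun v _ => mul_nonneg (hnn u₀ v) (sq_nonneg _)) ⟨v₀, Finset.mem_univ _, ?_⟩⟩
      have h2 : 0 < (V u₀ - V v₀) ^ 2 := by
        rw [← sq_abs]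
        exact pow_pos (abs_pos.mpr (sub_ne_zero.mpr hne₀)) 2
      exact mul_pos hc₀ h2
  have hCne : C ≠ 0 := hCpos.ne'
  -- divergence of iAB
  have hdiv_i : ∀ x, ∑ v, iAB x v = d x / C := by
    intro x
    rw [hidef]
    dsimp only
    rw [← Finset.sum_div]
  have hflow : IsUnitFlowR c A B iAB := by
    refine ⟨?_, ?_, ?_, ?_, ?_, ?_⟩
    · intro u v; rw [hidef]; dsimp only; rw [hanti_cgrad u v]; ring
    · intro u v h; rw [hidef]; dsimp only; rw [h]; ring
    · intro a ha
      rw [hdiv_i]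
      apply div_nonneg _ hCpos.le
      apply Finset.sum_nonneg
      intro v _
      apply mul_nonneg (hnn a v)
      rw [hVA a ha]
      linarith [hV1 v]
    · intro b hb
      rw [hdiv_i]
      apply div_nonpos_of_nonpos_of_nonneg _ hCpos.le
      apply Finset.sum_nonpos
      intro v _
      rw [hVB b hb, zero_sub, mul_neg]
      exact neg_nonpos.mpr (mul_nonneg (hnn b v) (hV0 v))
    · intro z hzA hzB
      rw [hdiv_i]
      rw [hharm z hzA hzB, zero_div]
    · rw [Finset.sum_congr rfl (fun a _ => hdiv_i a)]
      rw [← Finset.sum_div, ← hDir]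
      exact div_self hCne
  -- energy of the unit current flow
  have hEi : flowEnergyR c iAB = C⁻¹ := by
    have h1 : flowEnergyR c iAB = (1/2) * ∑ u, ∑ v, (c u v * (V u - V v)^2) / C^2 := by
      rw [flowEnergyR]
      congr 1
      apply Finset.sum_congr rfl; intro u _
      apply Finset.sum_congr rfl; intro v _
      by_cases h : 0 < c u v
      · rw [if_pos h, hidef]
        dsimp only
        rw [div_pow, sq (c u v * (V u - V v))]
        field_simp
      · rw [if_neg h]
        have hc0 : c u v = 0 := le_antisymm (not_lt.mp h) (hnn u v)
        rw [hc0]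
        simp
    rw [h1]
    simp_rw [← Finset.sum_div]
    rw [show (1/2 : ℝ) * ((∑ u, ∑ v, c u v * (V u - V v)^2) / C^2)
        = ((1/2) * ∑ u, ∑ v, c u v * (V u - V v)^2) / C^2 by ring]
    rw [show ((1/2 : ℝ) * ∑ u, ∑ v, c u v * (V u - V v)^2) = C from rfl]
    rw [sq, div_mul_eq_div_div, div_self hCne, one_div]
  -- energy nonnegativity
  have hEnn : ∀ ψ : X → X → ℝ, 0 ≤ flowEnergyR c ψ := by
    intro ψ; rw [flowEnergyR]
    apply mul_nonneg (by norm_num)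
    apply Finset.sum_nonneg; intro u _
    apply Finset.sum_nonneg; intro v _
    split
    · rename_i h; positivity
    · exact le_rfl
  -- energy decomposition for unit flows
  have hkey : ∀ φ : X → X → ℝ, IsUnitFlowR c A B φ →
      flowEnergyR c φ = C⁻¹ + flowEnergyR c (fun u v => φ u v - iAB u v) := by
    intro φ hφ
    obtain ⟨hanti, hsupp, _, _, hdiv0, hstr⟩ := hφ
    obtain ⟨hanti_i, hsupp_i, _, _, hdiv0_i, hstr_i⟩ := hflow
    set ψ : X → X → ℝ := fun u v => φ u v - iAB u v with hψ
    have hanti_ψ : ∀ u v, ψ v u = -ψ u v := fun u v => by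
      rw [hψ]; dsimp only; rw [hanti, hanti_i]; ring
    have hdiv_ψ : ∀ z, z ∉ A → z ∉ B → ∑ v, ψ z v = 0 := by
      intro z hzA hzB
      rw [hψ]; dsimp only
      rw [Finset.sum_sub_distrib, hdiv0 z hzA hzB, hdiv0_i z hzA hzB]; ring
    have hstr_ψ : ∑ a ∈ A, ∑ v, ψ a v = 0 := by
      rw [hψ]; dsimp only
      simp_rw [Finset.sum_sub_distrib]
      rw [hstr, hstr_i]
      ring
    have hcross : ∑ u, ∑ v, ψ u v * (V u - V v) = 0 := by
      have h0 : (1/2 : ℝ) * ∑ u, ∑ v, ψ u v * (V u - V v) = 0 := by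
        rw [hweight ψ hanti_ψ hdiv_ψ, hstr_ψ]
      linarith
    have hpt : ∀ u v, (if 0 < c u v then φ u v ^ 2 / c u v else 0)
        = (if 0 < c u v then iAB u v ^ 2 / c u v else 0)
          + (if 0 < c u v then ψ u v ^ 2 / c u v else 0)
          + (2/C) * (ψ u v * (V u - V v)) := by
      intro u v
      by_cases h : 0 < c u v
      · simp only [if_pos h]
        have hφuv : φ u v = iAB u v + ψ u v := by rw [hψ]; ring
        have hiv : iAB u v = c u v * (V u - V v) / C := by rw [hidef]
        rw [hφuv, hiv]
        field_simp
        ring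
      · have hc0 : c u v = 0 := le_antisymm (not_lt.mp h) (hnn u v)
        simp only [if_neg h]
        have hψ0 : ψ u v = 0 := by
          rw [hψ]; dsimp only; rw [hsupp u v hc0, hsupp_i u v hc0]; ring
        rw [hψ0]; ring
    have hsplit : flowEnergyR c φ = flowEnergyR c iAB + flowEnergyR c ψ
        + (1/2) * ∑ u, ∑ v, (2/C) * (ψ u v * (V u - V v)) := by
      rw [flowEnergyR, flowEnergyR, flowEnergyR]
      simp_rw [hpt]
      simp_rw [Finset.sum_add_distrib]
      ring
    have hzero : ∑ u, ∑ v, (2/C) * (ψ u v * (V u - V v)) = 0 := by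
      simp_rw [← Finset.mul_sum]
      rw [hcross, mul_zero]
    rw [hsplit, hzero, hEi]
    ring
  refine ⟨hflow, ?_, hEi, ?_⟩
  · intro φ hφ
    rw [hkey φ hφ]
    have := hEnn (fun u v => φ u v - iAB u v)
    linarith
  · intro φ hφ hEφ
    have hdec := hkey φ hφ
    rw [hEφ] at hdec
    have hψE : flowEnergyR c (fun u v => φ u v - iAB u v) = 0 := by linarith
    obtain ⟨_, hsupp, _, _, _, _⟩ := hφ
    obtain ⟨_, hsupp_i, _, _, _, _⟩ := hflow
    -- all terms of the energy vanish
    have hterms : ∀ u v, (if 0 < c u v then (φ u v - iAB u v) ^ 2 / c u v else 0) = 0 := by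
      have hsum : ∑ u, ∑ v, (if 0 < c u v then (φ u v - iAB u v) ^ 2 / c u v else 0) = 0 := by
        rw [flowEnergyR] at hψE
        have := hψE
        nlinarith [hψE]
      have hnn' : ∀ u ∈ Finset.univ (α := X),
          0 ≤ ∑ v, (if 0 < c u v then (φ u v - iAB u v) ^ 2 / c u v else 0) := by
        intro u _
        apply Finset.sum_nonneg; intro v _
        split
        · rename_i h; positivity
        · exact le_rfl
      intro u v
      have hu := (Finset.sum_eq_zero_iff_of_nonneg hnn').mp hsum u (Finset.mem_univ u)
      have hnn'' : ∀ v ∈ Finset.univ (α := X),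
          0 ≤ (if 0 < c u v then (φ u v - iAB u v) ^ 2 / c u v else 0) := by
        intro v _
        split
        · rename_i h; positivity
        · exact le_rfl
      exact (Finset.sum_eq_zero_iff_of_nonneg hnn'').mp hu v (Finset.mem_univ v)
    funext u v
    by_cases h : 0 < c u v
    · have := hterms u v
      rw [if_pos h] at this
      have h2 : (φ u v - iAB u v) ^ 2 = 0 := by
        rw [div_eq_zero_iff] at this
        rcases this with h' | h'
        · exact h'
        · exact absurd h' h.ne'
      have h3 := pow_eq_zero_iff (n := 2) (by norm_num) |>.mp h2
      linarith [h3]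
    · have hc0 : c u v = 0 := le_antisymm (not_lt.mp h) (hnn u v)
      rw [hsupp u v hc0, hsupp_i u v hc0]

end Main2

/-- Thomson's principle: for a finite electrical network `(𝒳,c)` and
disjoint nonempty `A`, `B`, the effective resistance `R(A,B) = 1/C(A,B)`
(`C(A,B) = 𝒟(V_{A,B})`, `V_{A,B}(x) = P_x(τ_A < τ_B)`) is the least energy of a
unitary flow from `A` to `B`, and the minimum is attained at the unit current flow
`i_{A,B} = −c∇V_{A,B}/C(A,B)` and at no other unitary flow. -/

theorem thomson_principle
    {X : Type*} [Fintype X] (c : X → X → ℝ)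
    (hnn : ∀ x y, 0 ≤ c x y) (hsymm : ∀ x y, c x y = c y x)
    (hpos : ∀ x, 0 < degR c x) (hconn : NetConnectedR c)
    (A B : Finset X) (hA : A.Nonempty) (hB : B.Nonempty) (hdisj : Disjoint A B) :
    letI V : X → ℝ := fun x => hitProbR (transPR c) (↑A : Set X) (↑B : Set X) x
    letI iAB : X → X → ℝ := fun u v => c u v * (V u - V v) / dirichletR c V
    IsUnitFlowR c A B iAB
    ∧ (∀ φ : X → X → ℝ, IsUnitFlowR c A B φ → (dirichletR c V)⁻¹ ≤ flowEnergyR c φ)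
    ∧ flowEnergyR c iAB = (dirichletR c V)⁻¹
    ∧ (∀ φ : X → X → ℝ, IsUnitFlowR c A B φ → flowEnergyR c φ = (dirichletR c V)⁻¹ →
        φ = iAB) := by
  exact thomson_main c hnn hsymm hpos hconn A B hA hB hdisj _ rfl _ rfl
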